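/- Let 𝒩(ρ) = Tr_B(VρV†) be a channel defined by an isometry V : S → A⊗B obtained as V|φ⟩ = U(|0⟩⊗|φ⟩) for a unitary U on A⊗B, where S is embedded so that V† = P U† with P the orthogonal projection onto an |S|-dimensional subspace. Let 𝒩̄ be the conjugate channel defined by V̄. Then the output state (𝒩 ⊗ 𝒩̄)(Φ^{S₁S₂}) applied to the maximally entangled input state Φ^{S₁S₂} has an eigenvalue of at least |S|/(|A|·|B|). -/

import Mathlib

open scoped BigOperators Kronecker ComplexOrder Matrix

lemma rayleigh_aux {n : Type*} [Fintype n] [DecidableEq n] [Nonempty n]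
    (A : Matrix n n ℂ) (hA : A.IsHermitian) (φ : n → ℂ) (c r : ℝ) (hr : 0 < r)
    (hnorm : ∑ i, Complex.normSq (φ i) = r)
    (hval : c * r ≤ (star φ ⬝ᵥ A.mulVec φ).re) :
    ∃ i, c ≤ hA.eigenvalues i := by
  obtain ⟨i₀, -, hi₀⟩ := Finset.exists_max_image Finset.univ hA.eigenvalues
    ⟨Classical.arbitrary n, Finset.mem_univ _⟩
  refine ⟨i₀, ?_⟩
  set Usp : Matrix n n ℂ := (hA.eigenvectorUnitary : Matrix n n ℂ) with hUsp
  set ψ : n → ℂ := (star Usp) *ᵥ φ with hψ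
  have hstar : star φ ᵥ* Usp = star ψ := by
    rw [hψ, Matrix.star_mulVec, Matrix.star_eq_conjTranspose, Matrix.conjTranspose_conjTranspose]
  have hUU : Usp * star Usp = 1 := Matrix.mem_unitaryGroup_iff.mp hA.eigenvectorUnitary.2
  have hval2 : star φ ⬝ᵥ A.mulVec φ = ∑ i, (hA.eigenvalues i : ℂ) * Complex.normSq (ψ i) := by
    conv_lhs => rw [hA.spectral_theorem, Unitary.conjStarAlgAut_apply]
    rw [← Matrix.mulVec_mulVec, ← Matrix.mulVec_mulVec, Matrix.dotProduct_mulVec, hstar]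
    rw [dotProduct]
    refine Finset.sum_congr rfl fun i _ => ?_
    rw [Matrix.mulVec_diagonal]
    rw [← hUsp, ← hψ]
    have : star ψ i = (starRingEnd ℂ) (ψ i) := rfl
    rw [this, Function.comp_apply, mul_comm ((starRingEnd ℂ) (ψ i)), mul_assoc,
      Complex.mul_conj]
    rfl
  have hnorm2 : ∑ i, Complex.normSq (ψ i) = r := by
    have : ((∑ i, Complex.normSq (ψ i) : ℝ) : ℂ) = ((r : ℝ) : ℂ) := by
      push_cast
      calc (∑ i, (Complex.normSq (ψ i) : ℂ)) = star ψ ⬝ᵥ ψ := by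
            simp only [dotProduct, Pi.star_apply]
            refine (Finset.sum_congr rfl fun i _ => ?_).symm
            rw [RCLike.star_def, mul_comm, Complex.mul_conj]
        _ = star φ ⬝ᵥ φ := by
            rw [← hstar, ← Matrix.dotProduct_mulVec, hψ, Matrix.mulVec_mulVec, hUU,
              Matrix.one_mulVec]
        _ = ((r : ℝ) : ℂ) := by
            rw [← hnorm]
            simp only [dotProduct, Pi.star_apply]
            push_cast
            refine Finset.sum_congr rfl fun i _ => ?_
            rw [RCLike.star_def, mul_comm, Complex.mul_conj]
    exact_mod_cast this
  have hre : (star φ ⬝ᵥ A.mulVec φ).re = ∑ i, hA.eigenvalues i * Complex.normSq (ψ i) := by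
    rw [hval2]
    push_cast
    rw [Complex.re_sum]
    refine Finset.sum_congr rfl fun i _ => ?_
    simp [Complex.mul_re]
  have hbound : ∑ i, hA.eigenvalues i * Complex.normSq (ψ i) ≤ hA.eigenvalues i₀ * r := by
    rw [← hnorm2, Finset.mul_sum]
    exact Finset.sum_le_sum fun i _ => by
      exact mul_le_mul_of_nonneg_right (hi₀ i (Finset.mem_univ i)) (Complex.normSq_nonneg _)
  have : c * r ≤ hA.eigenvalues i₀ * r := le_trans (hval.trans_eq hre) hbound
  exact le_of_mul_le_mul_right this hr

/-- Let 𝒩(ρ) = Tr_B(VρV†) be the channel given by the isometry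
V = U∘(embedding of S into A⊗B) for a unitary U on A⊗B, and 𝒩̄ the conjugate
channel given by V̄. Then (𝒩 ⊗ 𝒩̄)(Φ^{S₁S₂}) has an eigenvalue ≥ |S|/(|A||B|). -/
theorem conjugate_pair_channel_output_large_eigenvalue
    (a b s : ℕ) (ha : 0 < a) (hb : 0 < b) (hs : 0 < s) (hsab : s ≤ a * b)
    (U : Matrix (Fin a × Fin b) (Fin a × Fin b) ℂ)
    (hU : U ∈ Matrix.unitaryGroup (Fin a × Fin b) ℂ)
    (emb : Fin s ↪ Fin a × Fin b)
    (E : Matrix (Fin a × Fin b) (Fin s) ℂ)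
    (hE : E = Matrix.of fun x t => if x = emb t then (1 : ℂ) else 0)
    (V : Matrix (Fin a × Fin b) (Fin s) ℂ) (hVdef : V = U * E)
    (W : Matrix ((Fin a × Fin b) × (Fin a × Fin b)) (Fin s × Fin s) ℂ)
    (hW : W = V ⊗ₖ V.map (starRingEnd ℂ))
    (Φin : Matrix (Fin s × Fin s) (Fin s × Fin s) ℂ)
    (hΦin : Φin = Matrix.of fun x y =>
      if x.1 = x.2 ∧ y.1 = y.2 then ((s : ℂ))⁻¹ else 0)
    (σ : Matrix (Fin a × Fin a) (Fin a × Fin a) ℂ)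
    (hσ : σ = Matrix.of fun i j => ∑ k₁ : Fin b, ∑ k₂ : Fin b,
      (W * Φin * Wᴴ) ((i.1, k₁), (i.2, k₂)) ((j.1, k₁), (j.2, k₂)))
    (hH : σ.IsHermitian) :
    ∃ i, (s : ℝ) / ((a : ℝ) * b) ≤ hH.eigenvalues i := by
  haveI : NeZero a := ⟨ha.ne'⟩
  haveI : NeZero b := ⟨hb.ne'⟩
  haveI : NeZero s := ⟨hs.ne'⟩
  -- the isometry property
  have hVV : Vᴴ * V = 1 := by
    have hUunit : Uᴴ * U = 1 := by
      have := hU.1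
      rwa [Matrix.star_eq_conjTranspose] at this
    have hEE : Eᴴ * E = 1 := by
      ext t t'
      simp only [Matrix.mul_apply, Matrix.conjTranspose_apply, hE, Matrix.of_apply]
      simp [apply_ite (starRingEnd ℂ), ite_mul, mul_ite, Finset.sum_ite_eq',
        EmbeddingLike.apply_eq_iff_eq, Matrix.one_apply, eq_comm]
    rw [hVdef, Matrix.conjTranspose_mul, Matrix.mul_assoc, ← Matrix.mul_assoc Uᴴ, hUunit,
      Matrix.one_mul, hEE]
  have hcol : ∀ t : Fin s, ∑ x : Fin a × Fin b, Complex.normSq (V x t) = 1 := by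
    intro t
    have h1 : (Vᴴ * V) t t = 1 := by rw [hVV]; simp [Matrix.one_apply]
    have h2 : (Vᴴ * V) t t = ((∑ x : Fin a × Fin b, Complex.normSq (V x t) : ℝ) : ℂ) := by
      rw [Matrix.mul_apply]
      push_cast
      refine Finset.sum_congr rfl fun x _ => ?_
      rw [Matrix.conjTranspose_apply, RCLike.star_def, mul_comm, Complex.mul_conj]
    rw [h1] at h2
    exact_mod_cast h2.symm
  -- the column sums
  set z : Fin b → Fin b → ℂ := fun k₁ k₂ => ∑ i : Fin a, ∑ t : Fin s,
    V (i, k₁) t * (starRingEnd ℂ) (V (i, k₂) t) with hz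
  set w : Fin b → ℝ := fun k => ∑ i : Fin a, ∑ t : Fin s, Complex.normSq (V (i, k) t) with hwdef
  have hzdiag : ∀ k, z k k = ((w k : ℝ) : ℂ) := by
    intro k
    rw [hz, hwdef]
    push_cast
    refine Finset.sum_congr rfl fun i _ => Finset.sum_congr rfl fun t _ => Complex.mul_conj _
  have hwsum : ∑ k, w k = s := by
    calc ∑ k, w k = ∑ k : Fin b, ∑ i : Fin a, ∑ t : Fin s, Complex.normSq (V (i, k) t) := rfl
      _ = ∑ i : Fin a, ∑ k : Fin b, ∑ t : Fin s, Complex.normSq (V (i, k) t) :=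
          Finset.sum_comm
      _ = ∑ i : Fin a, ∑ t : Fin s, ∑ k : Fin b, Complex.normSq (V (i, k) t) :=
          Finset.sum_congr rfl fun _ _ => Finset.sum_comm
      _ = ∑ t : Fin s, ∑ i : Fin a, ∑ k : Fin b, Complex.normSq (V (i, k) t) :=
          Finset.sum_comm
      _ = ∑ t : Fin s, ∑ x : Fin a × Fin b, Complex.normSq (V x t) := by
          simp [Fintype.sum_prod_type]
      _ = s := by simp [hcol]
  -- entries of the output matrix
  have hWentry : ∀ x y : (Fin a × Fin b) × (Fin a × Fin b), (W * Φin * Wᴴ) x y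
      = (s : ℂ)⁻¹ * ((∑ t : Fin s, V x.1 t * (starRingEnd ℂ) (V x.2 t)) *
        (starRingEnd ℂ) (∑ u : Fin s, V y.1 u * (starRingEnd ℂ) (V y.2 u))) := by
    intro x y
    have hWd : ∀ (p : (Fin a × Fin b) × (Fin a × Fin b)) (q : Fin s × Fin s),
        W p q = V p.1 q.1 * (starRingEnd ℂ) (V p.2 q.2) := by
      intro p q; rw [hW]; rfl
    simp only [Matrix.mul_apply, Matrix.conjTranspose_apply]
    have inner : ∀ p : Fin s × Fin s, (∑ q : Fin s × Fin s, W x q * Φin q p)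
        = if p.1 = p.2 then (s : ℂ)⁻¹ * (∑ t : Fin s, W x (t, t)) else 0 := by
      intro p
      by_cases hp : p.1 = p.2
      · simp only [hΦin, Matrix.of_apply, hp, and_true, Fintype.sum_prod_type, if_pos]
        simp [mul_ite, Finset.sum_ite_eq', Finset.mul_sum, mul_comm]
      · simp [hΦin, Matrix.of_apply, hp]
    simp only [inner]
    rw [Fintype.sum_prod_type]
    simp only [ite_mul, zero_mul]
    rw [Finset.sum_congr rfl (fun u _ => Finset.sum_ite_eq (Finset.univ) u
      (fun u' => (s : ℂ)⁻¹ * (∑ t : Fin s, W x (t, t)) * star (W y (u, u'))) )]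
    simp only [Finset.mem_univ, if_true, hWd, RCLike.star_def, map_sum, map_mul,
      Complex.conj_conj]
    rw [← Finset.mul_sum]
    ring
  -- diagonal entries of σ
  have hσd : ∀ i j : Fin a, σ (i, i) (j, j) = ∑ k₁ : Fin b, ∑ k₂ : Fin b,
      (s : ℂ)⁻¹ * ((∑ t : Fin s, V (i, k₁) t * (starRingEnd ℂ) (V (i, k₂) t)) *
        (starRingEnd ℂ) (∑ u : Fin s, V (j, k₁) u * (starRingEnd ℂ) (V (j, k₂) u))) := by
    intro i j
    rw [hσ, Matrix.of_apply]
    exact Finset.sum_congr rfl fun k₁ _ => Finset.sum_congr rfl fun k₂ _ =>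
      hWentry ((i, k₁), (i, k₂)) ((j, k₁), (j, k₂))
  -- the total sum
  have hsum : ∑ i : Fin a, ∑ j : Fin a, σ (i, i) (j, j)
      = (s : ℂ)⁻¹ * ∑ k₁ : Fin b, ∑ k₂ : Fin b, z k₁ k₂ * (starRingEnd ℂ) (z k₁ k₂) := by
    calc ∑ i : Fin a, ∑ j : Fin a, σ (i, i) (j, j)
        = ∑ i : Fin a, ∑ j : Fin a, ∑ k₁ : Fin b, ∑ k₂ : Fin b,
          (s : ℂ)⁻¹ * ((∑ t : Fin s, V (i, k₁) t * (starRingEnd ℂ) (V (i, k₂) t)) *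
            (starRingEnd ℂ) (∑ u : Fin s, V (j, k₁) u * (starRingEnd ℂ) (V (j, k₂) u))) :=
          Finset.sum_congr rfl fun i _ => Finset.sum_congr rfl fun j _ => hσd i j
      _ = ∑ i : Fin a, ∑ k₁ : Fin b, ∑ k₂ : Fin b, ∑ j : Fin a,
          (s : ℂ)⁻¹ * ((∑ t : Fin s, V (i, k₁) t * (starRingEnd ℂ) (V (i, k₂) t)) *
            (starRingEnd ℂ) (∑ u : Fin s, V (j, k₁) u * (starRingEnd ℂ) (V (j, k₂) u))) :=
          Finset.sum_congr rfl fun i _ =>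
            (Finset.sum_comm.trans (Finset.sum_congr rfl fun k₁ _ => Finset.sum_comm))
      _ = ∑ k₁ : Fin b, ∑ i : Fin a, ∑ k₂ : Fin b, ∑ j : Fin a,
          (s : ℂ)⁻¹ * ((∑ t : Fin s, V (i, k₁) t * (starRingEnd ℂ) (V (i, k₂) t)) *
            (starRingEnd ℂ) (∑ u : Fin s, V (j, k₁) u * (starRingEnd ℂ) (V (j, k₂) u))) :=
          Finset.sum_comm
      _ = ∑ k₁ : Fin b, ∑ k₂ : Fin b, ∑ i : Fin a, ∑ j : Fin a,
          (s : ℂ)⁻¹ * ((∑ t : Fin s, V (i, k₁) t * (starRingEnd ℂ) (V (i, k₂) t)) *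
            (starRingEnd ℂ) (∑ u : Fin s, V (j, k₁) u * (starRingEnd ℂ) (V (j, k₂) u))) :=
          Finset.sum_congr rfl fun k₁ _ => Finset.sum_comm
      _ = (s : ℂ)⁻¹ * ∑ k₁ : Fin b, ∑ k₂ : Fin b, z k₁ k₂ * (starRingEnd ℂ) (z k₁ k₂) := by
          rw [Finset.mul_sum]
          refine Finset.sum_congr rfl fun k₁ _ => ?_
          rw [Finset.mul_sum]
          refine Finset.sum_congr rfl fun k₂ _ => ?_
          rw [hz]
          rw [show (∑ i : Fin a, ∑ t : Fin s, V (i, k₁) t * (starRingEnd ℂ) (V (i, k₂) t)) *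
              (starRingEnd ℂ) (∑ i : Fin a, ∑ t : Fin s, V (i, k₁) t *
                (starRingEnd ℂ) (V (i, k₂) t))
              = ∑ i : Fin a, ∑ j : Fin a,
                ((∑ t : Fin s, V (i, k₁) t * (starRingEnd ℂ) (V (i, k₂) t)) *
                  (starRingEnd ℂ) (∑ u : Fin s, V (j, k₁) u * (starRingEnd ℂ) (V (j, k₂) u)))
            from by rw [map_sum, Finset.sum_mul_sum]]
          rw [Finset.mul_sum]
          refine Finset.sum_congr rfl fun i _ => ?_
          rw [Finset.mul_sum]
  -- the test vector
  set φv : Fin a × Fin a → ℂ := fun p => if p.1 = p.2 then 1 else 0 with hφv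
  haveI : Nonempty (Fin a × Fin a) := ⟨(⟨0, ha⟩, ⟨0, ha⟩)⟩
  have hdot : star φv ⬝ᵥ σ *ᵥ φv = ∑ i : Fin a, ∑ j : Fin a, σ (i, i) (j, j) := by
    simp only [dotProduct, Matrix.mulVec, dotProduct, Fintype.sum_prod_type, hφv,
      Pi.star_apply]
    simp [apply_ite (starRingEnd ℂ), ite_mul, mul_ite, Finset.sum_ite_eq, Finset.sum_ite_eq']
  have hre : (star φv ⬝ᵥ σ *ᵥ φv).re
      = (s : ℝ)⁻¹ * ∑ k₁ : Fin b, ∑ k₂ : Fin b, Complex.normSq (z k₁ k₂) := by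
    have : star φv ⬝ᵥ σ *ᵥ φv =
        (((s : ℝ)⁻¹ * ∑ k₁ : Fin b, ∑ k₂ : Fin b, Complex.normSq (z k₁ k₂) : ℝ) : ℂ) := by
      rw [hdot, hsum]
      push_cast
      congr 1
      refine Finset.sum_congr rfl fun k₁ _ => Finset.sum_congr rfl fun k₂ _ => ?_
      rw [Complex.mul_conj]
    rw [this, Complex.ofReal_re]
  -- Cauchy-Schwarz estimates
  have hdiagle : ∑ k : Fin b, Complex.normSq (z k k)
      ≤ ∑ k₁ : Fin b, ∑ k₂ : Fin b, Complex.normSq (z k₁ k₂) :=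
    Finset.sum_le_sum fun k _ =>
      Finset.single_le_sum (fun _ _ => Complex.normSq_nonneg _) (Finset.mem_univ k)
  have hdiageq : ∑ k : Fin b, Complex.normSq (z k k) = ∑ k : Fin b, (w k) ^ 2 :=
    Finset.sum_congr rfl fun k _ => by rw [hzdiag k, Complex.normSq_ofReal, sq]
  have hcs : ((s : ℝ)) ^ 2 ≤ (b : ℝ) * ∑ k : Fin b, (w k) ^ 2 := by
    have h := sq_sum_le_card_mul_sum_sq (s := (Finset.univ : Finset (Fin b))) (f := w)
    rw [hwsum] at h
    simpa using h
  -- conclude via Rayleigh quotient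
  apply rayleigh_aux σ hH φv _ (a : ℝ) (by exact_mod_cast ha)
  · simp only [hφv, Fintype.sum_prod_type, apply_ite Complex.normSq, Complex.normSq_one,
      Complex.normSq_zero, Finset.sum_ite_eq, Finset.mem_univ, if_true]
    simp
  · rw [hre]
    have ha' : (0 : ℝ) < a := by exact_mod_cast ha
    have hb' : (0 : ℝ) < b := by exact_mod_cast hb
    have hs' : (0 : ℝ) < s := by exact_mod_cast hs
    have key : (s : ℝ) ^ 2 / (b : ℝ) ≤ ∑ k₁ : Fin b, ∑ k₂ : Fin b, Complex.normSq (z k₁ k₂) := by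
      rw [div_le_iff₀ hb'] at *
      nlinarith [hcs, hdiagle, hdiageq]
    calc (s : ℝ) / ((a : ℝ) * b) * a = (s : ℝ)⁻¹ * ((s : ℝ) ^ 2 / b) := by field_simp
      _ ≤ (s : ℝ)⁻¹ * ∑ k₁ : Fin b, ∑ k₂ : Fin b, Complex.normSq (z k₁ k₂) := by
          exact mul_le_mul_of_nonneg_left key (by positivity)
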